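/- arXiv:1805.08135 — 4 statements merged into one kernel-verified Lean document; each statement's English description precedes it below -/
import Mathlib

section
/- Let n ≥ 2 and let Ω ⊆ ℝⁿ be a set containing the closure of Q₃. If v : Ω → ℝ is continuous with |v(x)| ≤ 1/4 for all x ∈ Ω, then G⁻₁(v,Ω) ∩ Q₃ ≠ ∅; that is, there exist x̄ ∈ Q₃ and p ∈ ℝⁿ such that v(x) ≥ v(x̄) + p·(x−x̄) − (1/2)|x−x̄|² for all x ∈ Ω. -/
open MeasureTheory Metric
open scoped InnerProductSpace ENNReal

noncomputable section

abbrev Euc (n : ℕ) := EuclideanSpace ℝ (Fin n)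

/-- Loewner order -/
def matLE {n : ℕ} (A B : Matrix (Fin n) (Fin n) ℝ) : Prop := (B - A).PosSemidef

/-- Pucci minimal operator -/
def pucciInf {n : ℕ} (lam Lam : ℝ) (M : Matrix (Fin n) (Fin n) ℝ) : ℝ :=
  sInf {t : ℝ | ∃ A : Matrix (Fin n) (Fin n) ℝ,
    A.IsSymm ∧ matLE (lam • 1) A ∧ matLE A (Lam • 1) ∧ t = (A * M).trace}

/-- Hessian matrix via second iterated Fréchet derivative -/
def hessianMatrix {n : ℕ} (φ : Euc n → ℝ) (x : Euc n) : Matrix (Fin n) (Fin n) ℝ :=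
  Matrix.of fun i j =>
    iteratedFDeriv ℝ 2 φ x ![EuclideanSpace.single i 1, EuclideanSpace.single j 1]

/-- viscosity supersolution of M⁻(D²v) ≤ 0 -/
def ViscSupersol {n : ℕ} (lam Lam : ℝ) (Ω : Set (Euc n)) (v : Euc n → ℝ) : Prop :=
  ∀ x₀ ∈ Ω, ∀ φ : Euc n → ℝ,
    (∃ U : Set (Euc n), IsOpen U ∧ x₀ ∈ U ∧ ContDiffOn ℝ 2 φ U) →
    IsLocalMinOn (fun x => v x - φ x) Ω x₀ →
    pucciInf lam Lam (hessianMatrix φ x₀) ≤ 0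

def Gm {n : ℕ} (K : ℝ) (v : Euc n → ℝ) (Ω : Set (Euc n)) : Set (Euc n) :=
  {xb | xb ∈ Ω ∧ ∃ p : Euc n, ∀ x ∈ Ω, v x ≥ v xb + ⟪p, x - xb⟫_ℝ - K / 2 * ‖x - xb‖ ^ 2}

def Am {n : ℕ} (K : ℝ) (v : Euc n → ℝ) (Ω : Set (Euc n)) : Set (Euc n) := Ω \ Gm K v Ω

/-- open cube of side r centered at x -/
def cube {n : ℕ} (r : ℝ) (x : Euc n) : Set (Euc n) := {y | ∀ i, |y i - x i| < r / 2}


lemma abs_coord_le (n : ℕ) (x : Euc n) (i : Fin n) : |x i| ≤ ‖x‖ := by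
  rw [EuclideanSpace.norm_eq]
  have h1 : |x i| = Real.sqrt (‖x i‖ ^ 2) := by
    rw [Real.sqrt_sq_eq_abs]; simp
  rw [h1]
  apply Real.sqrt_le_sqrt
  exact Finset.single_le_sum (f := fun j => ‖x j‖ ^ 2) (fun j _ => by positivity)
    (Finset.mem_univ i)


/-- a bounded continuous function can be touched from below in Q₃ by a
paraboloid of opening 1. -/
theorem stmt_6 (n : ℕ) (hn : 2 ≤ n) (Ω : Set (Euc n)) (hQ : closure (cube 3 0) ⊆ Ω)
    (v : Euc n → ℝ) (hv : ContinuousOn v Ω) (hbd : ∀ x ∈ Ω, |v x| ≤ 1 / 4) :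
    ∃ xb ∈ cube (3 : ℝ) (0 : Euc n), ∃ p : Euc n,
      ∀ x ∈ Ω, v x ≥ v xb + ⟪p, x - xb⟫_ℝ - 1 / 2 * ‖x - xb‖ ^ 2 := by
  set w : Euc n → ℝ := fun x => v x + 1/2 * ‖x‖^2 with hw
  have h0mem : (0:Euc n) ∈ closure (cube 3 (0:Euc n)) :=
    subset_closure (fun i => by simp)
  have hK : IsCompact (closure (cube 3 (0:Euc n))) := by
    apply Metric.isCompact_of_isClosed_isBounded isClosed_closure
    apply Bornology.IsBounded.closure
    apply (Metric.isBounded_closedBall (x := (0:Euc n)) (r := 2*n)).subset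
    intro y hy
    simp only [Metric.mem_closedBall, dist_zero_right]
    rw [EuclideanSpace.norm_eq]
    have : ∑ i, ‖y i‖ ^ 2 ≤ (2*n)^2 := by
      calc ∑ i, ‖y i‖ ^ 2 ≤ ∑ _i : Fin n, (3/2:ℝ)^2 := by
            apply Finset.sum_le_sum
            intro i _
            have h3 : |y i - (0:Euc n) i| < 3/2 := by simpa using hy i
            simp only [PiLp.zero_apply, sub_zero] at h3
            have : ‖y i‖ ≤ 3/2 := by rw [Real.norm_eq_abs]; linarith
            nlinarith [norm_nonneg (y i)]
        _ = n * (9/4) := by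
            rw [Finset.sum_const, Finset.card_univ, Fintype.card_fin, nsmul_eq_mul]; norm_num
        _ ≤ (2*n)^2 := by
            have hn' : (2:ℝ) ≤ n := by exact_mod_cast hn
            nlinarith
    calc Real.sqrt (∑ i, ‖y i‖ ^ 2) ≤ Real.sqrt ((2*n)^2) := Real.sqrt_le_sqrt this
      _ = 2*n := by rw [Real.sqrt_sq (by positivity)]
  have hwc : ContinuousOn w (closure (cube 3 (0:Euc n))) := by
    apply (hv.mono hQ).add
    exact (continuous_const.mul (continuous_norm.pow 2)).continuousOn
  obtain ⟨xb, hxbcl, hmin⟩ := hK.exists_isMinOn ⟨0, h0mem⟩ hwc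
  have hxbΩ : xb ∈ Ω := hQ hxbcl
  have hvxb : -(1/4) ≤ v xb := by
    have := hbd xb hxbΩ; rw [abs_le] at this; linarith
  have hw0 : w xb ≤ 1/4 := by
    have h1 : w xb ≤ w 0 := hmin h0mem
    have h2 : |v 0| ≤ 1/4 := hbd 0 (hQ h0mem)
    rw [abs_le] at h2
    simp only [hw, norm_zero] at h1 ⊢
    nlinarith
  have hnxb : ‖xb‖ ≤ 1 := by
    simp only [hw] at hw0
    nlinarith [norm_nonneg xb]
  refine ⟨xb, fun i => ?_, -xb, fun x hx => ?_⟩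
  · have h1 := abs_coord_le n xb i
    simp only [PiLp.zero_apply, sub_zero]
    norm_num
    linarith
  · have key : w xb ≤ w x := by
      by_cases hxcl : x ∈ closure (cube 3 (0:Euc n))
      · exact hmin hxcl
      · obtain ⟨i, hi⟩ : ∃ i, 3/2 ≤ |x i| := by
          by_contra h
          push_neg at h
          exact hxcl (subset_closure (fun i => by simpa using h i))
        have hnx : 3/2 ≤ ‖x‖ := le_trans hi (abs_coord_le n x i)
        have hvx : -(1/4) ≤ v x := by
          have := hbd x hx; rw [abs_le] at this; linarith
        simp only [hw] at hw0 ⊢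
        nlinarith
    have expand : ⟪-xb, x - xb⟫_ℝ - 1/2*‖x-xb‖^2 = 1/2*‖xb‖^2 - 1/2*‖x‖^2 := by
      have h1 := norm_sub_sq_real x xb
      have h2 : ⟪-xb, x - xb⟫_ℝ = -⟪xb, x⟫_ℝ + ‖xb‖^2 := by
        rw [inner_neg_left, inner_sub_right, real_inner_self_eq_norm_sq]; ring
      have h3 : ⟪xb, x⟫_ℝ = ⟪x, xb⟫_ℝ := real_inner_comm _ _
      rw [h2, h3]; linarith
    simp only [hw] at key
    linarith
end
end

section
/- Let n ≥ 2 be an integer, 0 < λ ≤ Λ and K > 0 real constants, and let M be a real symmetric n×n matrix such that M ≥ −K·I (in the Loewner order) and M⁻_{λ,Λ}(M) ≤ 0. Then M ≤ (K·(n−1)·Λ/λ)·I; equivalently, every eigenvalue of M lies in the interval [−K, K(n−1)Λ/λ]. -/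
open MeasureTheory Metric
open scoped InnerProductSpace ENNReal

noncomputable section

open scoped Matrix in
/-- if M ≥ −K·I and M⁻_{λ,Λ}(M) ≤ 0 then M ≤ (K(n−1)Λ/λ)·I; equivalently
every eigenvalue of M lies in [−K, K(n−1)Λ/λ]. -/
theorem stmt_14 (n : ℕ) (hn : 2 ≤ n) (lam Lam K : ℝ) (hlam : 0 < lam) (hLam : lam ≤ Lam)
    (hK : 0 < K) (M : Matrix (Fin n) (Fin n) ℝ) (hM : M.IsSymm)
    (hlow : matLE (-(K • 1)) M) (hpucci : pucciInf lam Lam M ≤ 0) :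
    matLE M ((K * ((n : ℝ) - 1) * Lam / lam) • 1) := by
  classical
  set c : ℝ := K * ((n : ℝ) - 1) * Lam / lam with hc
  have hLam0 : 0 < Lam := lt_of_lt_of_le hlam hLam
  have hH : M.IsHermitian := by
    rw [Matrix.IsHermitian, Matrix.conjTranspose_eq_transpose_of_trivial]; exact hM
  set μ : Fin n → ℝ := hH.eigenvalues with hμ
  set U : Matrix (Fin n) (Fin n) ℝ := (hH.eigenvectorUnitary : Matrix (Fin n) (Fin n) ℝ) with hU
  set v : Fin n → (Fin n → ℝ) := fun i => ⇑(hH.eigenvectorBasis i) with hv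
  have hspec : M = U * Matrix.diagonal μ * star U := by
    have := hH.spectral_theorem
    simpa [RCLike.ofReal_real_eq_id] using this
  have hnorm : ∀ i, dotProduct (v i) (v i) = 1 := by
    intro i
    have h1 : ‖hH.eigenvectorBasis i‖ = 1 := hH.eigenvectorBasis.orthonormal.1 i
    have h2 : ⟪hH.eigenvectorBasis i, hH.eigenvectorBasis i⟫_ℝ = 1 := by
      rw [real_inner_self_eq_norm_mul_norm, h1]; ring
    rw [EuclideanSpace.inner_eq_star_dotProduct, star_trivial] at h2; exact h2
  -- eigenvalue lower bound
  have hlowμ : ∀ i, -K ≤ μ i := by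
    intro i
    have hps : (M + K • 1).PosSemidef := by
      have : M - -(K • (1 : Matrix (Fin n) (Fin n) ℝ)) = M + K • 1 := by rw [sub_neg_eq_add]
      rw [matLE, this] at hlow; exact hlow
    have := hps.dotProduct_mulVec_nonneg (v i)
    have hMv : M *ᵥ v i = μ i • v i := hH.mulVec_eigenvectorBasis i
    rw [Matrix.add_mulVec, hMv] at this
    simp only [Matrix.smul_mulVec, Matrix.one_mulVec, dotProduct_add,
      dotProduct_smul, smul_eq_mul, star_trivial, hnorm i, mul_one] at this
    linarith
  -- quadratic form bounds for admissible A
  have hquad : ∀ A : Matrix (Fin n) (Fin n) ℝ, matLE (lam • 1) A → matLE A (Lam • 1) →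
      ∀ i, lam ≤ dotProduct (v i) (A *ᵥ v i) ∧
        dotProduct (v i) (A *ᵥ v i) ≤ Lam := by
    intro A h1 h2 i
    have e1 := h1.dotProduct_mulVec_nonneg (v i)
    have e2 := h2.dotProduct_mulVec_nonneg (v i)
    simp only [Matrix.sub_mulVec, Matrix.smul_mulVec, Matrix.one_mulVec,
      dotProduct_sub, dotProduct_smul, smul_eq_mul, star_trivial,
      hnorm i, mul_one, sub_nonneg] at e1 e2
    exact ⟨e1, e2⟩
  -- trace identity
  have htrace : ∀ A : Matrix (Fin n) (Fin n) ℝ,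
      (A * M).trace = ∑ i, dotProduct (v i) (A *ᵥ v i) * μ i := by
    intro A
    conv_lhs => rw [hspec]
    rw [show A * (U * Matrix.diagonal μ * star U) = (A * U * Matrix.diagonal μ) * star U by
      simp [Matrix.mul_assoc]]
    rw [Matrix.trace_mul_comm]
    rw [show star U * (A * U * Matrix.diagonal μ) = (star U * (A * U)) * Matrix.diagonal μ by
      simp [Matrix.mul_assoc]]
    have hdiag : (star U * (A * U) * Matrix.diagonal μ).trace
        = ∑ i, (star U * (A * U)) i i * μ i := by
      simp [Matrix.trace, Matrix.diag, Matrix.mul_diagonal]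
    rw [hdiag]
    refine Finset.sum_congr rfl fun i _ => ?_
    have hB : (star U * (A * U)) i i = dotProduct (v i) (A *ᵥ v i) := by
      rw [Matrix.mul_apply, dotProduct]
      refine Finset.sum_congr rfl fun j _ => ?_
      have h1 : (star U) i j = v i j := by
        simp [hU, hv, Matrix.star_apply]
      have h2 : (A * U) j i = (A *ᵥ v i) j := by
        simp [Matrix.mul_apply, Matrix.mulVec, dotProduct, hU, hv]
      rw [h1, h2]
    rw [hB]
  -- lower bound for the Pucci infimum
  set L : ℝ := ∑ i, (if 0 ≤ μ i then lam else Lam) * μ i with hL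
  have hLle : L ≤ pucciInf lam Lam M := by
    apply le_csInf
    · refine ⟨((lam • 1 : Matrix (Fin n) (Fin n) ℝ) * M).trace, lam • 1, ?_, ?_, ?_, rfl⟩
      · rw [Matrix.IsSymm, Matrix.transpose_smul, Matrix.transpose_one]
      · rw [matLE, sub_self]; exact Matrix.PosSemidef.zero
      · rw [matLE]
        have he : (Lam • 1 : Matrix (Fin n) (Fin n) ℝ) - lam • 1
            = Matrix.diagonal (fun _ => Lam - lam) := by
          rw [← sub_smul, Matrix.smul_one_eq_diagonal]
        rw [he]
        exact Matrix.PosSemidef.diagonal fun _ => sub_nonneg.2 hLam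
    · rintro t ⟨A, hAsym, hA1, hA2, rfl⟩
      rw [htrace A]
      refine Finset.sum_le_sum fun i _ => ?_
      obtain ⟨hq1, hq2⟩ := hquad A hA1 hA2 i
      by_cases h : 0 ≤ μ i
      · rw [if_pos h]
        exact mul_le_mul_of_nonneg_right hq1 h
      · rw [if_neg h]
        have hneg : μ i < 0 := lt_of_not_ge h
        nlinarith
  have hL0 : L ≤ 0 := hLle.trans hpucci
  have hn1 : (1:ℝ) ≤ (n:ℝ) := by exact_mod_cast Nat.one_le_of_lt hn
  have hc0 : 0 ≤ c := by
    apply div_nonneg _ hlam.le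
    exact mul_nonneg (mul_nonneg hK.le (by linarith)) hLam0.le
  -- each eigenvalue is at most c
  have hupμ : ∀ j, μ j ≤ c := by
    intro j
    by_cases hj : 0 ≤ μ j
    · set P := Finset.univ.filter (fun i => 0 ≤ μ i) with hP
      set N := Finset.univ.filter (fun i => ¬ 0 ≤ μ i) with hN
      have hsplit : L = ∑ i ∈ P, lam * μ i + ∑ i ∈ N, Lam * μ i := by
        rw [hL, ← Finset.sum_filter_add_sum_filter_not Finset.univ (fun i => 0 ≤ μ i)]
        congr 1
        · exact Finset.sum_congr rfl fun i hi => by rw [if_pos (Finset.mem_filter.1 hi).2]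
        · exact Finset.sum_congr rfl fun i hi => by rw [if_neg (Finset.mem_filter.1 hi).2]
      have h1 : lam * μ j ≤ ∑ i ∈ P, lam * μ i := by
        apply Finset.single_le_sum (f := fun i => lam * μ i)
        · intro i hi; exact mul_nonneg hlam.le (Finset.mem_filter.1 hi).2
        · exact Finset.mem_filter.2 ⟨Finset.mem_univ j, hj⟩
      have hcard : (N.card : ℝ) ≤ (n:ℝ) - 1 := by
        have hsub : N ⊆ Finset.univ.erase j := by
          intro i hi
          refine Finset.mem_erase.2 ⟨?_, Finset.mem_univ i⟩
          rintro rfl; exact (Finset.mem_filter.1 hi).2 hj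
        have hle := Finset.card_le_card hsub
        rw [Finset.card_erase_of_mem (Finset.mem_univ j), Finset.card_univ,
          Fintype.card_fin] at hle
        have hn1' : 1 ≤ n := le_trans (by norm_num) hn
        calc (N.card:ℝ) ≤ ((n-1 : ℕ) : ℝ) := by exact_mod_cast hle
          _ = (n:ℝ) - 1 := by push_cast [hn1']; ring
      have h2 : -(((n:ℝ) - 1) * (Lam * K)) ≤ ∑ i ∈ N, Lam * μ i := by
        calc -(((n:ℝ)-1) * (Lam*K)) ≤ -((N.card : ℝ) * (Lam * K)) := by
              have : 0 ≤ Lam * K := mul_nonneg hLam0.le hK.le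
              nlinarith
          _ = ∑ _i ∈ N, (-(Lam * K)) := by rw [Finset.sum_const]; push_cast; ring
          _ ≤ ∑ i ∈ N, Lam * μ i := by
              apply Finset.sum_le_sum
              intro i hi
              have h3 := hlowμ i
              nlinarith
      have h4 : lam * μ j ≤ ((n:ℝ)-1) * (Lam * K) := by
        rw [hsplit] at hL0
        linarith
      rw [hc, le_div_iff₀ hlam]
      nlinarith
    · exact le_trans (le_of_lt (lt_of_not_ge hj)) hc0
  -- conclude
  rw [matLE]
  have hUU : U * star U = 1 := (Matrix.mem_unitaryGroup_iff).mp (hH.eigenvectorUnitary).2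
  have hkey : c • (1 : Matrix (Fin n) (Fin n) ℝ) - M
      = U * Matrix.diagonal (fun i => c - μ i) * star U := by
    have hd : Matrix.diagonal (fun i : Fin n => c - μ i)
        = c • (1 : Matrix (Fin n) (Fin n) ℝ) - Matrix.diagonal μ := by
      rw [Matrix.smul_one_eq_diagonal, ← Matrix.diagonal_sub]
    rw [hd, Matrix.mul_sub, Matrix.sub_mul, ← hspec]
    congr 1
    rw [Matrix.mul_smul, Matrix.smul_mul, Matrix.mul_one, hUU]
  rw [hkey]
  have := (Matrix.PosSemidef.diagonal
    (fun i => sub_nonneg.2 (hupμ i))).mul_mul_conjTranspose_same U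
  simpa [Matrix.star_eq_conjTranspose] using this
end
end

section
/- Let n ≥ 2 be an integer, 0 < λ ≤ Λ real constants, C > 0 and m > 0. Define w : ℝⁿ \ {0} → ℝ by w(x) = C·((|x|²/2)^{−m} − (2n)^{−m}). Then w is twice continuously differentiable on ℝⁿ \ {0}, and for every x ≠ 0, writing u = |x|²/2, the Hessian matrix D²w(x) = C·m·u^{−m−2}·((m+1)·x·xᵀ − u·I) has the eigenvalue C·m·u^{−m−2}·(m+1/2)·|x|² with eigenvector x and the eigenvalue −C·m·u^{−m−2}·|x|²/2 on the orthogonal complement of x; consequently M⁻_{λ,Λ}(D²w(x)) = C·m·u^{−m−2}·|x|²·(λ·(m+1/2) − Λ·(n−1)/2), which is ≥ 0 for all x ≠ 0 provided m ≥ (n−1)Λ/(2λ) − 1/2. -/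
open MeasureTheory Metric
open scoped InnerProductSpace ENNReal

noncomputable section

/-! ### Auxiliary lemmas -/

section Aux

open Matrix Finset

/-- trace of a product of positive semidefinite matrices is nonnegative -/
lemma aux_trace_mul_nonneg {N : ℕ} {A B : Matrix (Fin N) (Fin N) ℝ}
    (hA : A.PosSemidef) (hB : B.PosSemidef) : 0 ≤ (A * B).trace := by
  obtain ⟨D, hD⟩ : ∃ D : Matrix (Fin N) (Fin N) ℝ, B = Dᴴ * D := by
    open scoped MatrixOrder in
    refine ⟨CFC.sqrt B, ?_⟩
    have hsa : (CFC.sqrt B)ᴴ = CFC.sqrt B := (CFC.sqrt_nonneg B).posSemidef.1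
    rw [hsa, CFC.sqrt_mul_sqrt_self B hB.nonneg]
  have h1 : (A * B).trace = (D * A * Dᴴ).trace := by
    rw [hD, ← Matrix.mul_assoc, Matrix.trace_mul_comm, ← Matrix.mul_assoc]
  rw [h1]
  have hpsd : (D * A * Dᴴ).PosSemidef := hA.mul_mul_conjTranspose_same D
  have hdiag : ∀ i, 0 ≤ (D * A * Dᴴ) i i := by
    intro i
    have := hpsd.dotProduct_mulVec_nonneg (Pi.single i 1)
    simpa [dotProduct, Matrix.mulVec, Pi.single_apply, Finset.sum_ite_eq] using this
  exact Finset.sum_nonneg fun i _ => hdiag i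

lemma aux_psd_smul {N : ℕ} {M : Matrix (Fin N) (Fin N) ℝ} (hM : M.PosSemidef)
    {c : ℝ} (hc : 0 ≤ c) : (c • M).PosSemidef := by
  refine Matrix.PosSemidef.of_dotProduct_mulVec_nonneg ?_ ?_
  · show (c • M)ᴴ = c • M
    rw [Matrix.conjTranspose_smul]
    rw [hM.1.eq]
    congr 1
  · intro v
    rw [Matrix.smul_mulVec]
    have : dotProduct (star v) (c • (M *ᵥ v)) = c * dotProduct (star v) (M *ᵥ v) := by
      simp [dotProduct_smul]
    rw [this]
    exact mul_nonneg hc (hM.dotProduct_mulVec_nonneg v)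

/-- Pucci minimal operator on a matrix of the form a • x xᵀ + b • 1 -/
lemma aux_pucci_eval {N : ℕ} (hn : 1 ≤ N) (lam Lam : ℝ) (hlam : 0 < lam) (hLam : lam ≤ Lam)
    (x : Fin N → ℝ) (s a b : ℝ) (hs : 0 < s) (hsx : ∑ i, x i * x i = s)
    (hab : 0 ≤ a * s + b) (hb : b ≤ 0) :
    pucciInf lam Lam (a • Matrix.of (fun i j => x i * x j) + b • 1) =
      lam * (a * s + b) + Lam * ((N : ℝ) - 1) * b := by
  classical
  set X : Matrix (Fin N) (Fin N) ℝ := Matrix.of (fun i j => x i * x j) with hX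
  set Q : Matrix (Fin N) (Fin N) ℝ := s⁻¹ • X with hQdef
  have hXX : X * X = s • X := by
    ext i j
    simp only [hX, Matrix.mul_apply, Matrix.smul_apply, Matrix.of_apply, smul_eq_mul]
    calc ∑ k, (x i * x k) * (x k * x j) = ∑ k, (x i * x j) * (x k * x k) :=
          Finset.sum_congr rfl fun k _ => by ring
      _ = (x i * x j) * s := by rw [← Finset.mul_sum, hsx]
      _ = s * (x i * x j) := by ring
  have hQQ : Q * Q = Q := by
    rw [hQdef, Matrix.smul_mul, Matrix.mul_smul, hXX, smul_smul, smul_smul]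
    congr 1
    field_simp
  have htrX : X.trace = s := by
    simpa [Matrix.trace, Matrix.diag, hX] using hsx
  have htrQ : Q.trace = 1 := by
    rw [hQdef, Matrix.trace_smul, htrX, smul_eq_mul, inv_mul_cancel₀ hs.ne']
  have hQsymm : Qᵀ = Q := by
    rw [hQdef]
    ext i j
    simp [hX, mul_comm]
  have hvXv : ∀ v : Fin N → ℝ, dotProduct v (X *ᵥ v) = (∑ k, x k * v k) ^ 2 := by
    intro v
    have hmv : ∀ i, (X *ᵥ v) i = x i * (∑ k, x k * v k) := by
      intro i
      simp [hX, Matrix.mulVec, dotProduct, Finset.mul_sum, mul_assoc]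
    calc dotProduct v (X *ᵥ v) = ∑ i, v i * (x i * (∑ k, x k * v k)) := by
          simp [dotProduct, hmv]
      _ = (∑ i, x i * v i) * (∑ k, x k * v k) := by
          rw [Finset.sum_mul]; exact Finset.sum_congr rfl fun i _ => by ring
      _ = (∑ k, x k * v k) ^ 2 := by rw [sq]
  have hXpsd : X.PosSemidef := by
    refine Matrix.PosSemidef.of_dotProduct_mulVec_nonneg ?_ ?_
    · show Xᴴ = X
      ext i j
      simp [hX, mul_comm]
    · intro v
      have hstar : star v = v := by funext i; simp
      rw [hstar, hvXv v]
      positivity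
  have hQpsd : Q.PosSemidef := aux_psd_smul hXpsd (inv_nonneg.mpr hs.le)
  have h1Qpsd : (1 - Q).PosSemidef := by
    refine Matrix.PosSemidef.of_dotProduct_mulVec_nonneg ?_ ?_
    · show (1 - Q)ᴴ = 1 - Q
      have h : Qᴴ = Q := by ext i j; simp [hQdef, hX, mul_comm]
      simp [Matrix.conjTranspose_sub, h, hQsymm]
    · intro v
      have hstar : star v = v := by funext i; simp
      have hcs : (∑ k, x k * v k) ^ 2 ≤ s * (∑ k, v k * v k) := by
        have h := Finset.sum_mul_sq_le_sq_mul_sq Finset.univ x v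
        simp only [sq] at h ⊢
        calc (∑ k, x k * v k) * (∑ k, x k * v k) ≤ (∑ k, x k * x k) * (∑ k, v k * v k) := h
          _ = s * (∑ k, v k * v k) := by rw [hsx]
      have hval : dotProduct v ((1 - Q) *ᵥ v)
          = (∑ k, v k * v k) - s⁻¹ * (∑ k, x k * v k) ^ 2 := by
        rw [Matrix.sub_mulVec, dotProduct_sub, Matrix.one_mulVec, hQdef,
          Matrix.smul_mulVec, dotProduct_smul, smul_eq_mul, hvXv v]
        simp [dotProduct]
      rw [hstar, hval]
      have : s⁻¹ * (∑ k, x k * v k) ^ 2 ≤ s⁻¹ * (s * (∑ k, v k * v k)) :=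
        mul_le_mul_of_nonneg_left hcs (inv_nonneg.mpr hs.le)
      rw [← mul_assoc, inv_mul_cancel₀ hs.ne', one_mul] at this
      linarith
  set α : ℝ := a * s + b with hα
  have hMQ : a • X + b • 1 = α • Q + b • (1 - Q) := by
    rw [hQdef, hα]
    ext i j
    simp only [Matrix.add_apply, Matrix.smul_apply, Matrix.sub_apply, Matrix.one_apply,
      Matrix.of_apply, hX, smul_eq_mul]
    split_ifs <;> field_simp <;> ring
  set A₀ : Matrix (Fin N) (Fin N) ℝ := lam • Q + Lam • (1 - Q) with hA₀
  have hQ10 : Q * (1 - Q) = 0 := by rw [Matrix.mul_sub, Matrix.mul_one, hQQ, sub_self]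
  have h1Q0 : (1 - Q) * Q = 0 := by rw [Matrix.sub_mul, Matrix.one_mul, hQQ, sub_self]
  have h1Q1Q : (1 - Q) * (1 - Q) = 1 - Q := by
    rw [Matrix.sub_mul, Matrix.one_mul, hQ10, sub_zero]
  have hA₀M : A₀ * (α • Q + b • (1 - Q)) = (lam * α) • Q + (Lam * b) • (1 - Q) := by
    rw [hA₀]
    simp only [Matrix.add_mul, Matrix.mul_add, Matrix.smul_mul, Matrix.mul_smul,
      hQQ, hQ10, h1Q0, h1Q1Q, smul_zero, add_zero, zero_add, smul_smul]
    rw [mul_comm α lam, mul_comm b Lam]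
  clear_value X Q
  have t1 : ((lam * α) • Q).trace = lam * α := by
    rw [Matrix.trace_smul, htrQ, smul_eq_mul, mul_one]
  have t2 : ((Lam * b) • ((1 : Matrix (Fin N) (Fin N) ℝ) - Q)).trace
      = Lam * b * ((N : ℝ) - 1) := by
    rw [Matrix.trace_smul, Matrix.trace_sub, Matrix.trace_one, htrQ, smul_eq_mul,
      Fintype.card_fin]
  have htrA₀M : (A₀ * (α • Q + b • (1 - Q))).trace = lam * α + Lam * b * ((N : ℝ) - 1) := by
    rw [hA₀M, Matrix.trace_add, t1, t2]
  have hA₀symm : A₀.IsSymm := by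
    show A₀ᵀ = A₀
    simp [hA₀, Matrix.transpose_add, Matrix.transpose_smul, Matrix.transpose_sub,
      Matrix.transpose_one, hQsymm]
  have hle1 : matLE (lam • 1) A₀ := by
    show (A₀ - lam • 1).PosSemidef
    have : A₀ - lam • (1 : Matrix (Fin N) (Fin N) ℝ) = (Lam - lam) • (1 - Q) := by
      rw [hA₀]; module
    rw [this]
    exact aux_psd_smul h1Qpsd (by linarith)
  have hle2 : matLE A₀ (Lam • 1) := by
    show ((Lam • 1 : Matrix (Fin N) (Fin N) ℝ) - A₀).PosSemidef
    have : (Lam • 1 : Matrix (Fin N) (Fin N) ℝ) - A₀ = (Lam - lam) • Q := by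
      rw [hA₀]; module
    rw [this]
    exact aux_psd_smul hQpsd (by linarith)
  rw [hMQ]
  unfold pucciInf
  have hmem : lam * (a * s + b) + Lam * ((N : ℝ) - 1) * b ∈
      {t : ℝ | ∃ A : Matrix (Fin N) (Fin N) ℝ,
        A.IsSymm ∧ matLE (lam • 1) A ∧ matLE A (Lam • 1) ∧
        t = (A * (α • Q + b • (1 - Q))).trace} := by
    exact ⟨A₀, hA₀symm, hle1, hle2, by rw [htrA₀M, hα]; ring⟩
  have hlb : ∀ t ∈ {t : ℝ | ∃ A : Matrix (Fin N) (Fin N) ℝ,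
      A.IsSymm ∧ matLE (lam • 1) A ∧ matLE A (Lam • 1) ∧
      t = (A * (α • Q + b • (1 - Q))).trace},
      lam * (a * s + b) + Lam * ((N : ℝ) - 1) * b ≤ t := by
    rintro t ⟨A, hAs, hA1, hA2, rfl⟩
    have hA1' : (A - lam • 1).PosSemidef := hA1
    have hA2' : ((Lam • 1 : Matrix (Fin N) (Fin N) ℝ) - A).PosSemidef := hA2
    have hT1 : lam ≤ (A * Q).trace := by
      have h0 : 0 ≤ ((A - lam • 1) * Q).trace := aux_trace_mul_nonneg hA1' hQpsd
      rw [Matrix.sub_mul, Matrix.trace_sub, Matrix.smul_mul, Matrix.one_mul,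
        Matrix.trace_smul, htrQ, smul_eq_mul, mul_one] at h0
      linarith
    have hT2 : (A * (1 - Q)).trace ≤ Lam * ((N : ℝ) - 1) := by
      have h0 : 0 ≤ (((Lam • 1 : Matrix (Fin N) (Fin N) ℝ) - A) * (1 - Q)).trace :=
        aux_trace_mul_nonneg hA2' h1Qpsd
      have e : (((Lam • 1 : Matrix (Fin N) (Fin N) ℝ) - A) * (1 - Q)).trace
          = Lam * ((N : ℝ) - 1) - (A * (1 - Q)).trace := by
        rw [Matrix.sub_mul, Matrix.trace_sub, Matrix.smul_mul, Matrix.one_mul,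
          Matrix.trace_smul, Matrix.trace_sub, Matrix.trace_one, htrQ, smul_eq_mul,
          Fintype.card_fin]
      rw [e] at h0
      linarith
    have hdecomp : (A * (α • Q + b • (1 - Q))).trace
        = α * (A * Q).trace + b * (A * (1 - Q)).trace := by
      rw [Matrix.mul_add, Matrix.mul_smul, Matrix.mul_smul, Matrix.trace_add,
        Matrix.trace_smul, Matrix.trace_smul, smul_eq_mul, smul_eq_mul]
    rw [hdecomp]
    have hα0 : 0 ≤ α := hab
    have e1 : α * lam ≤ α * (A * Q).trace := mul_le_mul_of_nonneg_left hT1 hα0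
    have e2 : b * (Lam * ((N : ℝ) - 1)) ≤ b * (A * (1 - Q)).trace :=
      mul_le_mul_of_nonpos_left hT2 hb
    rw [hα] at e1
    nlinarith [e1, e2]
  exact le_antisymm (csInf_le ⟨_, hlb⟩ hmem) (le_csInf ⟨_, hmem⟩ hlb)

set_option maxHeartbeats 1600000 in
set_option synthInstance.maxHeartbeats 200000 in
/-- the Hessian of the barrier -/
lemma aux_hessian {n : ℕ} (C m : ℝ) (w : Euc n → ℝ)
    (hw : ∀ x : Euc n, w x = C * ((‖x‖ ^ 2 / 2) ^ (-m) - (2 * (n : ℝ)) ^ (-m)))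
    (x : Euc n) (hx : x ≠ 0) :
    hessianMatrix w x =
      (C * m * (‖x‖ ^ 2 / 2) ^ (-m - 2)) •
        ((m + 1) • Matrix.of (fun i j => x i * x j) - (‖x‖ ^ 2 / 2) • 1) := by
  classical
  have hxn : (0:ℝ) < ‖x‖ := norm_pos_iff.mpr hx
  have hupos : (0:ℝ) < ‖x‖ ^ 2 / 2 := by positivity
  -- derivative of z ↦ ‖z‖²/2
  have hq : ∀ y : Euc n, HasFDerivAt (fun z : Euc n => ‖z‖ ^ 2 / 2) (innerSL ℝ y) y := by
    intro y
    have h := (hasStrictFDerivAt_norm_sq y).hasFDerivAt.const_mul (2:ℝ)⁻¹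
    have e : ((2:ℝ)⁻¹ • ((2:ℕ) • (innerSL ℝ y)) : Euc n →L[ℝ] ℝ) = innerSL ℝ y := by
      ext z
      simp [two_smul]
      ring
    rw [e] at h
    have efun : (fun z : Euc n => ‖z‖ ^ 2 / 2) = fun z : Euc n => (2:ℝ)⁻¹ * ‖z‖ ^ 2 := by
      funext z; ring
    rw [efun]
    exact h
  -- first derivative of w away from 0
  have hderiv : ∀ y : Euc n, y ≠ 0 →
      HasFDerivAt w (((C * (-m)) * (‖y‖ ^ 2 / 2) ^ (-m - 1)) • innerSL ℝ y) y := by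
    intro y hy
    have hyn : (0:ℝ) < ‖y‖ := norm_pos_iff.mpr hy
    have hy0 : (0:ℝ) < ‖y‖ ^ 2 / 2 := by positivity
    have h1 : HasDerivAt (fun t : ℝ => t ^ (-m)) ((-m) * (‖y‖ ^ 2 / 2) ^ (-m - 1))
        (‖y‖ ^ 2 / 2) := by
      exact Real.hasDerivAt_rpow_const (x := ‖y‖ ^ 2 / 2) (p := -m) (Or.inl hy0.ne')
    have h2 : HasFDerivAt (fun z : Euc n => (‖z‖ ^ 2 / 2) ^ (-m))
        (((-m) * (‖y‖ ^ 2 / 2) ^ (-m - 1)) • innerSL ℝ y) y :=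
      by have := h1.comp_hasFDerivAt y (hq y); exact this
    have h3 := (h2.const_mul C).sub_const (C * (2 * (n:ℝ)) ^ (-m))
    rw [smul_smul, ← mul_assoc] at h3
    have hfe : w = fun z : Euc n => C * (‖z‖ ^ 2 / 2) ^ (-m) - C * (2 * (n:ℝ)) ^ (-m) := by
      funext z; rw [hw z]; ring
    rw [hfe]
    exact h3
  -- rewrite the derivative as a finite sum of coordinate functionals
  have hF : ∀ y : Euc n, (((C * (-m)) * (‖y‖ ^ 2 / 2) ^ (-m - 1)) • innerSL ℝ y
        : Euc n →L[ℝ] ℝ)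
      = ∑ j : Fin n, (((C * (-m)) * (‖y‖ ^ 2 / 2) ^ (-m - 1)) * y j) •
          (EuclideanSpace.proj j : Euc n →L[ℝ] ℝ) := by
    intro y
    ext z
    simp only [ContinuousLinearMap.smul_apply, ContinuousLinearMap.sum_apply,
      innerSL_apply_apply, PiLp.proj_apply, smul_eq_mul, PiLp.inner_apply,
      RCLike.inner_apply, conj_trivial, Finset.mul_sum]
    exact Finset.sum_congr rfl fun j _ => by ring
  -- second derivative pieces
  have hc1 : HasFDerivAt (fun y : Euc n => (C * (-m)) * (‖y‖ ^ 2 / 2) ^ (-m - 1))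
      ((C * (-m)) • (((-m - 1) * (‖x‖ ^ 2 / 2) ^ (-m - 2)) • innerSL ℝ x)) x := by
    have h1 : HasDerivAt (fun t : ℝ => t ^ (-m - 1)) ((-m - 1) * (‖x‖ ^ 2 / 2) ^ (-m - 2))
        (‖x‖ ^ 2 / 2) := by
      have h := Real.hasDerivAt_rpow_const (x := ‖x‖ ^ 2 / 2) (p := -m - 1) (Or.inl hupos.ne')
      convert h using 2
      ring
    exact (h1.comp_hasFDerivAt x (hq x)).const_mul (C * (-m))
  have hgj : ∀ j : Fin n, HasFDerivAt
      (fun y : Euc n => ((C * (-m)) * (‖y‖ ^ 2 / 2) ^ (-m - 1)) * y j)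
      ((((C * (-m)) * (‖x‖ ^ 2 / 2) ^ (-m - 1)) • (EuclideanSpace.proj j : Euc n →L[ℝ] ℝ))
        + x j • ((C * (-m)) • (((-m - 1) * (‖x‖ ^ 2 / 2) ^ (-m - 2)) • innerSL ℝ x))) x := by
    intro j
    have hp : HasFDerivAt (fun y : Euc n => y j)
        (EuclideanSpace.proj j : Euc n →L[ℝ] ℝ) x :=
      (EuclideanSpace.proj j : Euc n →L[ℝ] ℝ).hasFDerivAt
    exact hc1.mul hp
  have hFd : HasFDerivAt
      (fun y : Euc n => ∑ j : Fin n, (((C * (-m)) * (‖y‖ ^ 2 / 2) ^ (-m - 1)) * y j) •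
        (EuclideanSpace.proj j : Euc n →L[ℝ] ℝ))
      (∑ j : Fin n, ContinuousLinearMap.smulRight
        ((((C * (-m)) * (‖x‖ ^ 2 / 2) ^ (-m - 1)) • (EuclideanSpace.proj j : Euc n →L[ℝ] ℝ))
          + x j • ((C * (-m)) • (((-m - 1) * (‖x‖ ^ 2 / 2) ^ (-m - 2)) • innerSL ℝ x)))
        (EuclideanSpace.proj j : Euc n →L[ℝ] ℝ)) x := by
    apply HasFDerivAt.fun_sum
    intro j _
    have h := (hgj j).smul
      (hasFDerivAt_const (EuclideanSpace.proj j : Euc n →L[ℝ] ℝ) x)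
    rw [smul_zero, zero_add] at h
    exact h
  have h2nd : fderiv ℝ (fderiv ℝ w) x
      = ∑ j : Fin n, ContinuousLinearMap.smulRight
        ((((C * (-m)) * (‖x‖ ^ 2 / 2) ^ (-m - 1)) • (EuclideanSpace.proj j : Euc n →L[ℝ] ℝ))
          + x j • ((C * (-m)) • (((-m - 1) * (‖x‖ ^ 2 / 2) ^ (-m - 2)) • innerSL ℝ x)))
        (EuclideanSpace.proj j : Euc n →L[ℝ] ℝ) := by
    have hmemx : ({(0:Euc n)}ᶜ : Set (Euc n)) ∈ nhds x :=
      isOpen_compl_singleton.mem_nhds (by simpa using hx)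
    have hev : fderiv ℝ w =ᶠ[nhds x]
        fun y : Euc n => ∑ j : Fin n, (((C * (-m)) * (‖y‖ ^ 2 / 2) ^ (-m - 1)) * y j) •
          (EuclideanSpace.proj j : Euc n →L[ℝ] ℝ) := by
      filter_upwards [hmemx] with y hy
      have hy0 : y ≠ 0 := by simpa using hy
      rw [(hderiv y hy0).fderiv, hF y]
    rw [hev.fderiv_eq]
    exact hFd.fderiv
  -- assemble the matrix
  ext i j
  simp only [hessianMatrix, Matrix.of_apply]
  rw [iteratedFDeriv_two_apply]
  simp only [Matrix.cons_val_zero, Matrix.cons_val_one, Matrix.head_cons]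
  rw [h2nd]
  have hus : (‖x‖ ^ 2 / 2) ^ (-m - 1) = (‖x‖ ^ 2 / 2) ^ (-m - 2) * (‖x‖ ^ 2 / 2) := by
    rw [show (-m - 1 : ℝ) = (-m - 2) + 1 by ring, Real.rpow_add_one hupos.ne']
  simp only [ContinuousLinearMap.sum_apply, ContinuousLinearMap.smulRight_apply,
    ContinuousLinearMap.add_apply, ContinuousLinearMap.smul_apply, innerSL_apply_apply,
    PiLp.proj_apply, smul_eq_mul, EuclideanSpace.single_apply,
    EuclideanSpace.inner_single_right, conj_trivial, mul_one, mul_ite, mul_zero,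
    Matrix.smul_apply, Matrix.sub_apply, Matrix.of_apply, Matrix.one_apply,
    Finset.sum_ite_eq', Finset.mem_univ, if_true]
  rcases eq_or_ne i j with h | h
  · subst h
    rw [if_pos rfl, if_pos rfl, hus]
    ring
  · have h' : ¬ (j = i) := fun e => h e.symm
    rw [if_neg h, if_neg h']
    ring

lemma aux_contdiff {n : ℕ} (C m : ℝ) (w : Euc n → ℝ)
    (hw : ∀ x : Euc n, w x = C * ((‖x‖ ^ 2 / 2) ^ (-m) - (2 * (n : ℝ)) ^ (-m))) :
    ContDiffOn ℝ 2 w {(0 : Euc n)}ᶜ := by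
  have hfun : w = fun y => C * (‖y‖ ^ 2 / 2) ^ (-m) - C * (2 * (n : ℝ)) ^ (-m) := by
    funext y; rw [hw y]; ring
  rw [hfun]
  intro y hy
  have hy0 : y ≠ 0 := by simpa using hy
  have hq : ContDiffAt ℝ 2 (fun z : Euc n => ‖z‖ ^ 2 / 2) y :=
    ((contDiff_norm_sq ℝ).div_const 2).contDiffAt
  have hne : (‖y‖ ^ 2 / 2 : ℝ) ≠ 0 := by
    have : (0:ℝ) < ‖y‖ := norm_pos_iff.mpr hy0
    positivity
  have h2 : ContDiffAt ℝ 2 (fun t : ℝ => t ^ (-m)) (‖y‖ ^ 2 / 2) :=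
    Real.contDiffAt_rpow_const_of_ne hne
  exact (((h2.comp y hq).const_smul C).sub contDiffAt_const).contDiffWithinAt

end Aux

/-- the barrier w(x) = C((|x|²/2)^{−m} − (2n)^{−m}) is C² away from the
origin, its Hessian has the stated form and eigenstructure, the Pucci minimal operator
takes the stated value on it, and it is a subsolution when m ≥ (n−1)Λ/(2λ) − 1/2. -/
theorem stmt_15 (n : ℕ) (hn : 2 ≤ n) (lam Lam C m : ℝ) (hlam : 0 < lam) (hLam : lam ≤ Lam)
    (hC : 0 < C) (hm : 0 < m)
    (w : Euc n → ℝ)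
    (hw : ∀ x : Euc n, w x = C * ((‖x‖ ^ 2 / 2) ^ (-m) - (2 * (n : ℝ)) ^ (-m))) :
    ContDiffOn ℝ 2 w {(0 : Euc n)}ᶜ ∧
    (∀ x : Euc n, x ≠ 0 →
      hessianMatrix w x =
        (C * m * (‖x‖ ^ 2 / 2) ^ (-m - 2)) •
          ((m + 1) • Matrix.of (fun i j => x i * x j) - (‖x‖ ^ 2 / 2) • 1)) ∧
    (∀ x : Euc n, x ≠ 0 →
      (hessianMatrix w x).mulVec (fun i => x i) =
        fun i => (C * m * (‖x‖ ^ 2 / 2) ^ (-m - 2) * (m + 1 / 2) * ‖x‖ ^ 2) * x i) ∧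
    (∀ x : Euc n, x ≠ 0 → ∀ y : Euc n, ⟪x, y⟫_ℝ = 0 →
      (hessianMatrix w x).mulVec (fun i => y i) =
        fun i => (-(C * m * (‖x‖ ^ 2 / 2) ^ (-m - 2) * ‖x‖ ^ 2 / 2)) * y i) ∧
    (∀ x : Euc n, x ≠ 0 →
      pucciInf lam Lam (hessianMatrix w x) =
        C * m * (‖x‖ ^ 2 / 2) ^ (-m - 2) * ‖x‖ ^ 2 *
          (lam * (m + 1 / 2) - Lam * ((n : ℝ) - 1) / 2)) ∧
    (m ≥ ((n : ℝ) - 1) * Lam / (2 * lam) - 1 / 2 →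
      ∀ x : Euc n, x ≠ 0 → 0 ≤ pucciInf lam Lam (hessianMatrix w x)) := by
  have hn1 : (1:ℕ) ≤ n := le_trans (by norm_num) hn
  have hn2 : (2:ℝ) ≤ (n:ℝ) := by exact_mod_cast hn
  -- common quantities
  have key : ∀ x : Euc n, x ≠ 0 →
      pucciInf lam Lam (hessianMatrix w x) =
        C * m * (‖x‖ ^ 2 / 2) ^ (-m - 2) * ‖x‖ ^ 2 *
          (lam * (m + 1 / 2) - Lam * ((n : ℝ) - 1) / 2) := by
    intro x hx
    have hxn : (0:ℝ) < ‖x‖ := norm_pos_iff.mpr hx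
    set s : ℝ := ‖x‖ ^ 2 with hs_def
    have hs : 0 < s := by positivity
    have hsum : ∑ i, x i * x i = s := by
      rw [hs_def, ← real_inner_self_eq_norm_sq]
      simp only [PiLp.inner_apply, RCLike.inner_apply, conj_trivial]
    set c : ℝ := C * m * (s / 2) ^ (-m - 2) with hc_def
    have hc : 0 < c := by
      have : (0:ℝ) < (s/2) ^ (-m-2) := Real.rpow_pos_of_pos (by positivity) _
      positivity
    have hmat : hessianMatrix w x =
        (c * (m + 1)) • Matrix.of (fun i j => x i * x j) + (-(c * (s/2))) • 1 := by
      rw [aux_hessian C m w hw x hx]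
      ext i j
      simp [Matrix.smul_apply, Matrix.sub_apply, Matrix.add_apply, Matrix.one_apply]
      split_ifs <;> ring
    rw [hmat, aux_pucci_eval hn1 lam Lam hlam hLam (fun i => x i) s (c * (m+1)) (-(c * (s/2)))
      hs hsum (by nlinarith [mul_pos hc hs]) (by nlinarith [mul_pos hc hs])]
    ring
  refine ⟨aux_contdiff C m w hw, fun x hx => aux_hessian C m w hw x hx, ?_, ?_, key, ?_⟩
  · -- eigenvector x
    intro x hx
    have hxn : (0:ℝ) < ‖x‖ := norm_pos_iff.mpr hx
    have hsum : ∑ j, x j * x j = ‖x‖ ^ 2 := by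
      rw [← real_inner_self_eq_norm_sq]
      simp only [PiLp.inner_apply, RCLike.inner_apply, conj_trivial]
    rw [aux_hessian C m w hw x hx]
    funext i
    set c : ℝ := C * m * (‖x‖ ^ 2 / 2) ^ (-m - 2) with hc_def
    simp only [Matrix.mulVec, dotProduct, Matrix.smul_apply, Matrix.sub_apply,
      Matrix.smul_apply, Matrix.of_apply, Matrix.one_apply, smul_eq_mul]
    have hterm : ∀ j, c * ((m+1) * (x i * x j) - ‖x‖^2/2 * (if i = j then (1:ℝ) else 0)) * x j
        = (c * (m+1) * x i) * (x j * x j) - (if i = j then c * (‖x‖^2/2) * x j else 0) := by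
      intro j; split_ifs <;> ring
    rw [Finset.sum_congr rfl (fun j _ => hterm j), Finset.sum_sub_distrib,
      ← Finset.mul_sum, hsum, Finset.sum_ite_eq Finset.univ i (fun j => c * (‖x‖^2/2) * x j)]
    simp only [Finset.mem_univ, if_true]
    ring
  · -- orthogonal eigenvectors
    intro x hx y hy
    have hsum : ∑ j, x j * y j = 0 := by
      rw [← hy]
      simp [PiLp.inner_apply, RCLike.inner_apply, mul_comm]
    rw [aux_hessian C m w hw x hx]
    funext i
    set c : ℝ := C * m * (‖x‖ ^ 2 / 2) ^ (-m - 2) with hc_def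
    simp only [Matrix.mulVec, dotProduct, Matrix.smul_apply, Matrix.sub_apply,
      Matrix.smul_apply, Matrix.of_apply, Matrix.one_apply, smul_eq_mul]
    have hterm : ∀ j, c * ((m+1) * (x i * x j) - ‖x‖^2/2 * (if i = j then (1:ℝ) else 0)) * y j
        = (c * (m+1) * x i) * (x j * y j) - (if i = j then c * (‖x‖^2/2) * y j else 0) := by
      intro j; split_ifs <;> ring
    rw [Finset.sum_congr rfl (fun j _ => hterm j), Finset.sum_sub_distrib,
      ← Finset.mul_sum, hsum, Finset.sum_ite_eq Finset.univ i (fun j => c * (‖x‖^2/2) * y j)]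
    simp only [Finset.mem_univ, if_true]
    ring
  · -- nonnegativity
    intro hm' x hx
    rw [key x hx]
    have hxn : (0:ℝ) < ‖x‖ := norm_pos_iff.mpr hx
    have hrp : (0:ℝ) < (‖x‖ ^ 2 / 2) ^ (-m - 2) := Real.rpow_pos_of_pos (by positivity) _
    have hbr : 0 ≤ lam * (m + 1 / 2) - Lam * ((n : ℝ) - 1) / 2 := by
      have h1 : ((n : ℝ) - 1) * Lam / (2 * lam) ≤ m + 1/2 := by linarith
      have h2 : lam * (((n : ℝ) - 1) * Lam / (2 * lam)) ≤ lam * (m + 1/2) :=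
        mul_le_mul_of_nonneg_left h1 hlam.le
      have h3 : lam * (((n : ℝ) - 1) * Lam / (2 * lam)) = Lam * ((n : ℝ) - 1) / 2 := by
        field_simp
      linarith
    positivity
end
end

section
/- Let n ≥ 1 be an integer and 0 < λ ≤ Λ real constants. If A is a real symmetric n×n matrix with λ·I ≤ A ≤ Λ·I (in the Loewner order), then trace(A) ≤ n·(Λ/λ)^{(n−1)/n}·(det A)^{1/n}. -/
noncomputable section

open Matrix in
lemma eig_ps_bound {n : ℕ} {A : Matrix (Fin n) (Fin n) ℝ} (hH : A.IsHermitian)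
    {c : ℝ} (h : (A - c • 1).PosSemidef) (i : Fin n) : c ≤ hH.eigenvalues i := by
  have hv := hH.mulVec_eigenvectorBasis i
  have h2 := h.dotProduct_mulVec_nonneg (⇑(hH.eigenvectorBasis i))
  have hnorm : dotProduct (star ⇑(hH.eigenvectorBasis i)) ⇑(hH.eigenvectorBasis i)
      = 1 := by
    have h1 := hH.eigenvectorBasis.orthonormal.1 i
    have := EuclideanSpace.inner_eq_star_dotProduct (𝕜 := ℝ)
      (hH.eigenvectorBasis i) (hH.eigenvectorBasis i)
    rw [real_inner_self_eq_norm_sq, h1] at this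
    simpa using this.symm
  rw [Matrix.sub_mulVec, hv] at h2
  rw [dotProduct_sub, Matrix.smul_mulVec, Matrix.one_mulVec,
    dotProduct_smul, dotProduct_smul, hnorm] at h2
  simp at h2
  linarith

open Matrix in
lemma trace_eq_sum_eigs {n : ℕ} {A : Matrix (Fin n) (Fin n) ℝ} (hH : A.IsHermitian) :
    A.trace = ∑ i, hH.eigenvalues i := by
  simpa using hH.trace_eq_sum_eigenvalues

lemma scalar_ineq (n : ℕ) (hn : 1 ≤ n) (lam Lam : ℝ) (hlam : 0 < lam) (hLam : lam ≤ Lam)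
    (μ : Fin n → ℝ) (hlo : ∀ i, lam ≤ μ i) (hhi : ∀ i, μ i ≤ Lam) :
    ∑ i, μ i ≤ (n : ℝ) * (Lam / lam) ^ (((n : ℝ) - 1) / n) * (∏ i, μ i) ^ ((1 : ℝ) / n) := by
  have hμpos : ∀ i, 0 < μ i := fun i => lt_of_lt_of_le hlam (hlo i)
  have hprodpos : 0 < ∏ i, μ i := Finset.prod_pos (fun i _ => hμpos i)
  have hn0 : (n : ℝ) ≠ 0 := by positivity
  have hratio : (1 : ℝ) ≤ Lam / lam := (one_le_div hlam).2 hLam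
  have key : ∀ i, μ i ≤ (Lam / lam) ^ (((n : ℝ) - 1) / n) * (∏ j, μ j) ^ ((1 : ℝ) / n) := by
    intro i
    have hRHSpos : 0 < (Lam / lam) ^ (((n : ℝ) - 1) / n) * (∏ j, μ j) ^ ((1 : ℝ) / n) := by
      positivity
    -- compare n-th powers
    have hpow : μ i ^ n ≤ ((Lam / lam) ^ (((n : ℝ) - 1) / n) * (∏ j, μ j) ^ ((1 : ℝ) / n)) ^ n := by
      have hrw : ((Lam / lam) ^ (((n : ℝ) - 1) / n) * (∏ j, μ j) ^ ((1 : ℝ) / n)) ^ n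
          = (Lam / lam) ^ (n - 1 : ℕ) * ∏ j, μ j := by
        rw [mul_pow, ← Real.rpow_natCast ((Lam/lam) ^ (((n:ℝ)-1)/n)) n,
          ← Real.rpow_natCast ((∏ j, μ j) ^ ((1:ℝ)/n)) n,
          ← Real.rpow_mul (by positivity), ← Real.rpow_mul (le_of_lt hprodpos),
          div_mul_cancel₀ _ hn0, one_div_mul_cancel hn0, Real.rpow_one]
        congr 1
        rw [← Real.rpow_natCast (Lam/lam) (n-1), Nat.cast_sub hn, Nat.cast_one]
      rw [hrw]
      -- μ i ^ n = μ i * μ i ^ (n-1) ≤ (∏ μ / lam^(n-1)) * Lam^(n-1)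
      have h1 : μ i * lam ^ (n - 1 : ℕ) ≤ ∏ j, μ j := by
        classical
        calc μ i * lam ^ (n - 1 : ℕ) ≤ μ i * ∏ j ∈ Finset.univ.erase i, μ j := by
              apply mul_le_mul_of_nonneg_left _ (le_of_lt (hμpos i))
              calc lam ^ (n - 1 : ℕ) = ∏ j ∈ Finset.univ.erase i, lam := by
                    rw [Finset.prod_const, Finset.card_erase_of_mem (Finset.mem_univ i),
                      Finset.card_univ, Fintype.card_fin]
                _ ≤ ∏ j ∈ Finset.univ.erase i, μ j :=
                    Finset.prod_le_prod (fun j _ => le_of_lt hlam) (fun j _ => hlo j)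
          _ = ∏ j, μ j := Finset.mul_prod_erase _ _ (Finset.mem_univ i)
      have h2 : μ i ^ (n - 1 : ℕ) ≤ Lam ^ (n - 1 : ℕ) :=
        pow_le_pow_left₀ (le_of_lt (hμpos i)) (hhi i) _
      calc μ i ^ n = μ i * μ i ^ (n - 1 : ℕ) := by
            rw [← pow_succ']; congr 1; omega
        _ ≤ μ i * Lam ^ (n - 1 : ℕ) :=
            mul_le_mul_of_nonneg_left h2 (le_of_lt (hμpos i))
        _ ≤ ((∏ j, μ j) / lam ^ (n - 1 : ℕ)) * Lam ^ (n - 1 : ℕ) := by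
            apply mul_le_mul_of_nonneg_right _ (pow_nonneg (le_trans (le_of_lt hlam) hLam) _)
            rw [le_div_iff₀ (by positivity)]; exact h1
        _ = (Lam / lam) ^ (n - 1 : ℕ) * ∏ j, μ j := by
            rw [div_pow]; ring
    exact le_of_pow_le_pow_left₀ (by omega) (le_of_lt hRHSpos) hpow
  calc ∑ i, μ i ≤ ∑ _i : Fin n, (Lam / lam) ^ (((n : ℝ) - 1) / n) * (∏ j, μ j) ^ ((1 : ℝ) / n) :=
        Finset.sum_le_sum (fun i _ => key i)
    _ = (n : ℝ) * (Lam / lam) ^ (((n : ℝ) - 1) / n) * (∏ j, μ j) ^ ((1 : ℝ) / n) := by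
        rw [Finset.sum_const, Finset.card_univ, Fintype.card_fin, nsmul_eq_mul]; ring

open Matrix in
lemma eig_ps_bound' {n : ℕ} {A : Matrix (Fin n) (Fin n) ℝ} (hH : A.IsHermitian)
    {c : ℝ} (h : (c • 1 - A).PosSemidef) (i : Fin n) : hH.eigenvalues i ≤ c := by
  have hv := hH.mulVec_eigenvectorBasis i
  have h2 := h.dotProduct_mulVec_nonneg (⇑(hH.eigenvectorBasis i))
  have hnorm : dotProduct (star ⇑(hH.eigenvectorBasis i)) ⇑(hH.eigenvectorBasis i)
      = 1 := by
    have h1 := hH.eigenvectorBasis.orthonormal.1 i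
    have := EuclideanSpace.inner_eq_star_dotProduct (𝕜 := ℝ)
      (hH.eigenvectorBasis i) (hH.eigenvectorBasis i)
    rw [real_inner_self_eq_norm_sq, h1] at this
    simpa using this.symm
  rw [Matrix.sub_mulVec, hv] at h2
  rw [dotProduct_sub, Matrix.smul_mulVec, Matrix.one_mulVec,
    dotProduct_smul, dotProduct_smul, hnorm] at h2
  simp at h2
  linarith


/-- for λ·I ≤ A ≤ Λ·I, trace(A) ≤ n (Λ/λ)^{(n−1)/n} (det A)^{1/n}. -/
theorem stmt_17 (n : ℕ) (hn : 1 ≤ n) (lam Lam : ℝ) (hlam : 0 < lam) (hLam : lam ≤ Lam)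
    (A : Matrix (Fin n) (Fin n) ℝ) (hA : A.IsSymm)
    (hlow : matLE (lam • 1) A) (hhigh : matLE A (Lam • 1)) :
    A.trace ≤ (n : ℝ) * (Lam / lam) ^ (((n : ℝ) - 1) / n) * A.det ^ ((1 : ℝ) / n) := by
  have hH : A.IsHermitian := by
    rw [Matrix.IsHermitian, Matrix.conjTranspose_eq_transpose_of_trivial]
    exact hA
  have hlo : ∀ i, lam ≤ hH.eigenvalues i := eig_ps_bound hH hlow
  have hhi : ∀ i, hH.eigenvalues i ≤ Lam := eig_ps_bound' hH hhigh
  have hdet : A.det = ∏ i, hH.eigenvalues i := by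
    simpa using hH.det_eq_prod_eigenvalues
  rw [trace_eq_sum_eigs hH, hdet]
  exact scalar_ineq n hn lam Lam hlam hLam hH.eigenvalues hlo hhi
end
end
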